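/- Let μ be a σ-finite measure on a measurable space X, let ℓ : X → ℝ be measurable with ℓ(x) > 0 for μ-a.e. x and Z := ∫ ℓ dμ ∈ (0, ∞), and let π be the probability measure with density ℓ/Z with respect to μ. Let f₁, …, f_{M̂} : X → ℝ be nonnegative measurable functions, and for w ∈ ℝ^{M̂} with w_i ≥ 0 define g_w(x) := ∑_{i=1}^{M̂} w_i f_i(x). Let W be any set of weight vectors such that for every w ∈ W: g_w(x) > 0 for μ-a.e. x, ∫ g_w dμ ∈ (0, ∞), and log ℓ and log g_w are π-integrable; let q_w be the probability measure with density g_w / ∫ g_w dμ with respect to μ. Define J(w) := ∫ log(∑_{i=1}^{M̂} w_i f_i) dπ − log ∫ exp(log ∑_{i=1}^{M̂} w_i f_i − log ℓ) dπ. Then KL(π ‖ q_w) = ∫ log ℓ dπ − J(w) for every w ∈ W; consequently w* ∈ W minimizes w ↦ KL(π ‖ q_w) over W if and only if w* maximizes J over W. In particular this holds for W equal to the admissible weights in the simplex {w : w_i ≥ 0, ∑_{i=1}^{M̂} w_i = 1}. -/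

import Mathlib

open MeasureTheory Real

/-- The Kullback–Leibler divergence `KL(p ‖ q) = ∫ log (dp/dq) dp`. -/
noncomputable def klDiv {X : Type*} [MeasurableSpace X] (p q : Measure X) : ℝ :=
  ∫ x, Real.log ((p.rnDeriv q) x).toReal ∂p

/-- two-level objective, single group. With posterior `p` of
density `ℓ/Z` w.r.t. `μ`, virtual-observation likelihoods `f i ≥ 0`, mixture
likelihood `gw w x = ∑ i, w i * f i x` and reconstructed posterior `q w`, for
every admissible nonnegative weight vector `w ∈ W` we have
`KL(p ‖ q w) = ∫ log ℓ dp − J w`, where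
`J w = ∫ log (∑ i, w i * f i) dp − log ∫ exp (log (∑ i, w i * f i) − log ℓ) dp`;
hence `w* ∈ W` minimizes the KL divergence over `W` iff it maximizes `J` over `W`. -/
theorem two_level_single_group_objective
    {X : Type*} [MeasurableSpace X] (μ : Measure X) [SigmaFinite μ]
    (ℓ : X → ℝ) (hℓ_meas : Measurable ℓ) (hℓ_pos : ∀ᵐ x ∂μ, 0 < ℓ x)
    (hℓ_int : Integrable ℓ μ) (hZ_pos : 0 < ∫ x, ℓ x ∂μ)
    (p : Measure X)
    (hp : p = μ.withDensity (fun x => ENNReal.ofReal (ℓ x / ∫ x, ℓ x ∂μ)))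
    (Mhat : ℕ) (f : Fin Mhat → X → ℝ)
    (hf_meas : ∀ i, Measurable (f i)) (hf_nonneg : ∀ i x, 0 ≤ f i x)
    (gw : (Fin Mhat → ℝ) → X → ℝ)
    (hgw : ∀ w x, gw w x = ∑ i : Fin Mhat, w i * f i x)
    (W : Set (Fin Mhat → ℝ))
    (hW_nonneg : ∀ w ∈ W, ∀ i, 0 ≤ w i)
    (hW_pos_ae : ∀ w ∈ W, ∀ᵐ x ∂μ, 0 < gw w x)
    (hW_int : ∀ w ∈ W, Integrable (gw w) μ)
    (hW_pos : ∀ w ∈ W, 0 < ∫ x, gw w x ∂μ)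
    (hlogℓ_int : Integrable (fun x => Real.log (ℓ x)) p)
    (hW_loggw_int : ∀ w ∈ W, Integrable (fun x => Real.log (gw w x)) p)
    (q : (Fin Mhat → ℝ) → Measure X)
    (hq : ∀ w, q w =
      μ.withDensity (fun x => ENNReal.ofReal (gw w x / ∫ x, gw w x ∂μ)))
    (J : (Fin Mhat → ℝ) → ℝ)
    (hJ : ∀ w, J w =
      (∫ x, Real.log (∑ i : Fin Mhat, w i * f i x) ∂p) -
        Real.log (∫ x, Real.exp (Real.log (∑ i : Fin Mhat, w i * f i x) -
          Real.log (ℓ x)) ∂p)) :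
    (∀ w ∈ W, klDiv p (q w) = (∫ x, Real.log (ℓ x) ∂p) - J w) ∧
      (∀ wstar ∈ W,
        IsMinOn (fun w => klDiv p (q w)) W wstar ↔ IsMaxOn J W wstar) := by
  set Z : ℝ := ∫ x, ℓ x ∂μ with hZdef
  have hp_ac : p ≪ μ := hp ▸ withDensity_absolutelyContinuous μ _
  -- p is a probability measure
  haveI hp_prob : IsProbabilityMeasure p := by
    constructor
    rw [hp, withDensity_apply _ MeasurableSet.univ, Measure.restrict_univ,
      ← ofReal_integral_eq_lintegral_ofReal (hℓ_int.div_const Z)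
        (hℓ_pos.mono fun x hx => div_nonneg hx.le hZ_pos.le),
      integral_div, div_self hZ_pos.ne', ENNReal.ofReal_one]
  have key : ∀ w ∈ W, klDiv p (q w) =
      (∫ x, Real.log (ℓ x) ∂p) - (∫ x, Real.log (gw w x) ∂p) +
        (Real.log (∫ x, gw w x ∂μ) - Real.log Z) := by
    intro w hw
    set Zw : ℝ := ∫ x, gw w x ∂μ with hZw
    have hZw_pos : 0 < Zw := hW_pos w hw
    have hg_meas : Measurable (gw w) := by
      have : gw w = fun x => ∑ i : Fin Mhat, w i * f i x := funext (hgw w)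
      rw [this]
      exact Finset.measurable_sum _ fun i _ => (hf_meas i).const_mul _
    have hg_pos := hW_pos_ae w hw
    have hqdens_meas : Measurable fun x => ENNReal.ofReal (gw w x / Zw) :=
      (hg_meas.div_const Zw).ennreal_ofReal
    have hq_prob : IsProbabilityMeasure (q w) := by
      constructor
      rw [hq w, withDensity_apply _ MeasurableSet.univ, Measure.restrict_univ,
        ← ofReal_integral_eq_lintegral_ofReal ((hW_int w hw).div_const Zw)
          (hg_pos.mono fun x hx => div_nonneg hx.le hZw_pos.le),
        integral_div, ← hZw, div_self hZw_pos.ne', ENNReal.ofReal_one]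
    have hμq : μ ≪ q w := by
      rw [hq w]
      refine withDensity_absolutelyContinuous' hqdens_meas.aemeasurable ?_
      filter_upwards [hg_pos] with x hx
      exact (ENNReal.ofReal_pos.mpr (div_pos hx hZw_pos)).ne'
    have hp_acq : p ≪ q w := hp_ac.trans hμq
    -- compute the Radon–Nikodym derivative
    set h : X → ENNReal := fun x => ENNReal.ofReal ((ℓ x / Z) / (gw w x / Zw)) with hhdef
    have hh_meas : Measurable h :=
      ((hℓ_meas.div_const Z).div (hg_meas.div_const Zw)).ennreal_ofReal
    have hwd : (q w).withDensity h = p := by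
      rw [hq w, ← withDensity_mul _ hqdens_meas hh_meas, hp]
      refine withDensity_congr_ae ?_
      filter_upwards [hg_pos] with x hx
      have hne : gw w x / Zw ≠ 0 := (div_pos hx hZw_pos).ne'
      simp only [Pi.mul_apply, hhdef]
      rw [← ENNReal.ofReal_mul (div_nonneg hx.le hZw_pos.le), mul_comm,
        div_mul_cancel₀ _ hne]
    have hrn : h =ᵐ[q w] p.rnDeriv (q w) :=
      Measure.eq_rnDeriv (ν := q w) (s := 0) hh_meas
        (Measure.MutuallySingular.zero_left) (by rw [zero_add, hwd])
    have hrnp : h =ᵐ[p] p.rnDeriv (q w) := hp_acq.ae_eq hrn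
    have hℓ_posp : ∀ᵐ x ∂p, 0 < ℓ x := hp_ac.ae_le hℓ_pos
    have hg_posp : ∀ᵐ x ∂p, 0 < gw w x := hp_ac.ae_le hg_pos
    have hcongr : ∀ᵐ x ∂p, Real.log ((p.rnDeriv (q w)) x).toReal =
        Real.log (ℓ x) - Real.log (gw w x) + (Real.log Zw - Real.log Z) := by
      filter_upwards [hrnp, hℓ_posp, hg_posp] with x hx hℓx hgx
      rw [← hx, hhdef, ENNReal.toReal_ofReal
        (div_nonneg (div_nonneg hℓx.le hZ_pos.le) (div_nonneg hgx.le hZw_pos.le)),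
        Real.log_div (div_pos hℓx hZ_pos).ne' (div_pos hgx hZw_pos).ne',
        Real.log_div hℓx.ne' hZ_pos.ne', Real.log_div hgx.ne' hZw_pos.ne']
      ring
    rw [klDiv, integral_congr_ae hcongr,
      integral_add (f := fun x => Real.log (ℓ x) - Real.log (gw w x))
        (g := fun _ => Real.log Zw - Real.log Z)
        (hlogℓ_int.sub (hW_loggw_int w hw)) (integrable_const _),
      integral_sub hlogℓ_int (hW_loggw_int w hw), integral_const, probReal_univ,
      one_smul]
  have hJ' : ∀ w ∈ W, J w =
      (∫ x, Real.log (gw w x) ∂p) -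
        (Real.log (∫ x, gw w x ∂μ) - Real.log Z) := by
    intro w hw
    set Zw : ℝ := ∫ x, gw w x ∂μ with hZw
    have hZw_pos : 0 < Zw := hW_pos w hw
    have hℓ_posp : ∀ᵐ x ∂p, 0 < ℓ x := hp_ac.ae_le hℓ_pos
    have hg_posp : ∀ᵐ x ∂p, 0 < gw w x := hp_ac.ae_le (hW_pos_ae w hw)
    have hexp : ∀ᵐ x ∂p, Real.exp (Real.log (∑ i : Fin Mhat, w i * f i x) -
        Real.log (ℓ x)) = gw w x / ℓ x := by
      filter_upwards [hℓ_posp, hg_posp] with x hℓx hgx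
      rw [← hgw w x, Real.exp_sub, Real.exp_log hgx, Real.exp_log hℓx]
    have hratio : ∫ x, gw w x / ℓ x ∂p = Zw / Z := by
      rw [hp]
      rw [show (fun x => ENNReal.ofReal (ℓ x / Z)) =
        (fun x => (((fun x => (ℓ x / Z).toNNReal) x : NNReal) : ENNReal)) from rfl]
      rw [integral_withDensity_eq_integral_smul (hℓ_meas.div_const Z).real_toNNReal]
      have : ∀ᵐ x ∂μ, (ℓ x / Z).toNNReal • (gw w x / ℓ x) = gw w x / Z := by
        filter_upwards [hℓ_pos] with x hx
        rw [NNReal.smul_def, Real.coe_toNNReal _ (div_nonneg hx.le hZ_pos.le)]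
        field_simp
        rw [smul_eq_mul, mul_comm Z, div_mul_div_comm, mul_comm (ℓ x),
          mul_div_mul_right _ _ hx.ne', div_mul_cancel₀ _ hZ_pos.ne']
      rw [integral_congr_ae this, integral_div]
    have h2 : ∫ x, Real.exp (Real.log (∑ i : Fin Mhat, w i * f i x) -
        Real.log (ℓ x)) ∂p = Zw / Z := by
      rw [integral_congr_ae hexp, hratio]
    have h1 : ∫ x, Real.log (∑ i : Fin Mhat, w i * f i x) ∂p =
        ∫ x, Real.log (gw w x) ∂p := by
      simp_rw [← hgw]
    rw [hJ w, h1, h2, Real.log_div hZw_pos.ne' hZ_pos.ne']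
  have main : ∀ w ∈ W, klDiv p (q w) = (∫ x, Real.log (ℓ x) ∂p) - J w := by
    intro w hw
    rw [key w hw, hJ' w hw]
    ring
  refine ⟨main, fun wstar hws => ?_⟩
  rw [isMinOn_iff, isMaxOn_iff]
  constructor
  · intro h y hy
    have := h y hy
    rw [main wstar hws, main y hy, sub_le_sub_iff_left] at this
    exact this
  · intro h y hy
    rw [main wstar hws, main y hy, sub_le_sub_iff_left]
    exact h y hy
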